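/- arXiv:cs/0403011 — 2 statements merged into one kernel-verified Lean document; each statement's English description precedes it below -/
import Mathlib

section
/- In any needed narrowing step with canonical substitution decomposition phi_k ∘ ... ∘ phi_1 computed by the function λ (the needed narrowing strategy), each phi_i is either the identity substitution or a single-variable binding {x ↦ c(x_1,...,x_n)} where c is a constructor, x_1,...,x_n are pairwise distinct fresh variables, and x occurs in (phi_{i-1} ∘ ... ∘ phi_1)(t). -/
namespace PE

/-- First-order terms in applicative form over constructors `C`,
defined operation symbols `F`, and natural-number variables. -/
inductive Tm (C F : Type) : Type
  | var : ℕ → Tm C F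
  | con : C → Tm C F
  | op  : F → Tm C F
  | app : Tm C F → Tm C F → Tm C F

namespace Tm

variable {C F : Type}

/-- Application of a substitution. -/
def subst (σ : ℕ → Tm C F) : Tm C F → Tm C F
  | var x => σ x
  | con c => con c
  | op f => op f
  | app s t => app (s.subst σ) (t.subst σ)

/-- The subterm at a position (positions are lists of left/right directions). -/
def subtermAt : Tm C F → List Bool → Option (Tm C F)
  | t, [] => some t
  | app s _, false :: p => s.subtermAt p
  | app _ t, true :: p => t.subtermAt p
  | _, _ => none

/-- Replacing the subterm at a position. -/
def replaceAt : Tm C F → List Bool → Tm C F → Tm C F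
  | _, [], u => u
  | app s t, false :: p, u => app (s.replaceAt p u) t
  | app s t, true :: p, u => app s (t.replaceAt p u)
  | t, _ :: _, _ => t

/-- The set of variables of a term. -/
def vars : Tm C F → Set ℕ
  | var x => {x}
  | con _ => ∅
  | op _ => ∅
  | app s t => s.vars ∪ t.vars

/-- Number of occurrences of a variable. -/
def varCount (x : ℕ) : Tm C F → ℕ
  | var y => if y = x then 1 else 0
  | con _ => 0
  | op _ => 0
  | app s t => s.varCount x + t.varCount x

/-- A term is linear if no variable occurs twice. -/
def Linear (t : Tm C F) : Prop := ∀ x, t.varCount x ≤ 1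

/-- The head (root) symbol of a term, as a term. -/
def head : Tm C F → Tm C F
  | app s _ => s.head
  | t => t

/-- Number of arguments of the spine. -/
def numArgs : Tm C F → ℕ
  | app s _ => s.numArgs + 1
  | _ => 0

/-- Operation-rooted term. -/
def OpRooted (t : Tm C F) : Prop := ∃ f : F, t.head = op f

/-- Constructor-rooted term. -/
def ConRooted (t : Tm C F) : Prop := ∃ c : C, t.head = con c

/-- A constructor term: no defined operation symbol occurs. -/
def NoOps : Tm C F → Prop
  | var _ => True
  | con _ => True
  | op _ => False
  | app s t => NoOps s ∧ NoOps t

/-- A pattern: a defined operation applied to constructor terms. -/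
def IsPattern : Tm C F → Prop
  | op _ => True
  | app s t => IsPattern s ∧ NoOps t
  | _ => False

/-- The set of operation symbols occurring in a term. -/
def opsIn : Tm C F → Set F
  | var _ => ∅
  | con _ => ∅
  | op f => {f}
  | app s t => s.opsIn ∪ t.opsIn

/-- The distinct variables of a term in left-to-right order. -/
def varList : Tm C F → List ℕ
  | var x => [x]
  | con _ => []
  | op _ => []
  | app s t => s.varList ++ (t.varList.filter (fun x => !(s.varList.contains x)))

end Tm

/-- Substitutions. -/
abbrev Subst (C F : Type) := ℕ → Tm C F

/-- The identity substitution. -/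
def idS {C F : Type} : Subst C F := Tm.var

/-- Composition: apply `σ` first, then `τ`. -/
def compS {C F : Type} (σ τ : Subst C F) : Subst C F := fun x => (σ x).subst τ

/-- Composition `φₖ ∘ ⋯ ∘ φ₁` of a list of substitutions (head applied first). -/
def compList {C F : Type} (φs : List (Subst C F)) : Subst C F :=
  fun x => φs.foldl (fun t φ => t.subst φ) (Tm.var x)

/-- The single-variable binding `{x ↦ u}`. -/
def single {C F : Type} (x : ℕ) (u : Tm C F) : Subst C F :=
  fun y => if y = x then u else Tm.var y

/-- A head symbol applied to a list of variables. -/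
def appVars {C F : Type} (h : Tm C F) (xs : List ℕ) : Tm C F :=
  xs.foldl (fun t x => Tm.app t (Tm.var x)) h

/-- A constructor substitution: all bindings are constructor terms. -/
def ConstrSubst {C F : Type} (σ : Subst C F) : Prop := ∀ x, (σ x).NoOps

/-- A rewrite rule `l → r`. -/
abbrev Rule (C F : Type) := Tm C F × Tm C F

/-- A term rewriting system. -/
abbrev TRS (C F : Type) := Set (Rule C F)

/-- Subsumption ordering: `t` is an instance of `s`. -/
def Subsumes {C F : Type} (s t : Tm C F) : Prop := ∃ σ : Subst C F, t = s.subst σ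

def StrictSub {C F : Type} (s t : Tm C F) : Prop := Subsumes s t ∧ ¬ Subsumes t s

def Variant {C F : Type} (s t : Tm C F) : Prop := Subsumes s t ∧ Subsumes t s

def RuleVariant {C F : Type} (r₁ r₂ : Rule C F) : Prop :=
  (∃ σ : Subst C F, r₂.1 = r₁.1.subst σ ∧ r₂.2 = r₁.2.subst σ) ∧
  (∃ τ : Subst C F, r₁.1 = r₂.1.subst τ ∧ r₁.2 = r₂.2.subst τ)

/-- A rewrite step with a given rule at a given position. -/
def RewriteAtRule {C F : Type} (r : Rule C F) (p : List Bool) (t t' : Tm C F) : Prop :=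
  ∃ σ : Subst C F, t.subtermAt p = some (r.1.subst σ) ∧ t' = t.replaceAt p (r.2.subst σ)

/-- One rewrite step in a TRS. -/
def Rew {C F : Type} (R : TRS C F) (t t' : Tm C F) : Prop :=
  ∃ r ∈ R, ∃ p, RewriteAtRule r p t t'

def RewStar {C F : Type} (R : TRS C F) : Tm C F → Tm C F → Prop :=
  Relation.ReflTransGen (Rew R)

def RewPlus {C F : Type} (R : TRS C F) : Tm C F → Tm C F → Prop :=
  Relation.TransGen (Rew R)

/-- A redex: an instance of a left-hand side. -/
def IsRedex {C F : Type} (R : TRS C F) (t : Tm C F) : Prop :=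
  ∃ r ∈ R, ∃ σ : Subst C F, t = r.1.subst σ

/-- Root-stable (head-normal form): cannot be rewritten to a redex. -/
def RootStable {C F : Type} (R : TRS C F) (t : Tm C F) : Prop :=
  ∀ u, RewStar R t u → ¬ IsRedex R u

/-- Root-normalizing: has a root-stable reduct. -/
def RootNormalizing {C F : Type} (R : TRS C F) (t : Tm C F) : Prop :=
  ∃ u, RewStar R t u ∧ RootStable R u

/-- A left-linear constructor-based TRS (a functional logic program). -/
def LLCB {C F : Type} (R : TRS C F) : Prop :=
  ∀ r ∈ R, r.1.Linear ∧ r.1.IsPattern ∧ r.2.vars ⊆ r.1.vars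

/-- A rewrite step at a position strictly below the root. -/
def InnerRew {C F : Type} (R : TRS C F) (t t' : Tm C F) : Prop :=
  ∃ r ∈ R, ∃ p, p ≠ [] ∧ RewriteAtRule r p t t'

/-- Weakly orthogonal: left-linear and all critical pairs are trivial. -/
def WeaklyOrthogonal {C F : Type} (R : TRS C F) : Prop :=
  (∀ r ∈ R, r.1.Linear) ∧
  ∀ r ∈ R, ∀ r' ∈ R, ∀ (p : List Bool) (u : Tm C F) (σ σ' : Subst C F),
    r.1.subtermAt p = some u → (∀ x, u ≠ Tm.var x) →
    u.subst σ = r'.1.subst σ' →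
    (r.1.subst σ).replaceAt p (r'.2.subst σ') = r.2.subst σ

/-- Almost orthogonal: left-linear and all critical pairs are trivial overlays. -/
def AlmostOrthogonal {C F : Type} (R : TRS C F) : Prop :=
  (∀ r ∈ R, r.1.Linear) ∧
  ∀ r ∈ R, ∀ r' ∈ R, ∀ (p : List Bool) (u : Tm C F) (σ σ' : Subst C F),
    r.1.subtermAt p = some u → (∀ x, u ≠ Tm.var x) →
    u.subst σ = r'.1.subst σ' →
    p = [] ∧ r.2.subst σ = r'.2.subst σ'

/- ### Definitional trees -/

def IsMinimum {C F : Type} (T : Set (Tm C F)) (π : Tm C F) : Prop :=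
  π ∈ T ∧ ∀ t ∈ T, Subsumes π t

def IsMaximalIn {C F : Type} (T : Set (Tm C F)) (t : Tm C F) : Prop :=
  t ∈ T ∧ ∀ u ∈ T, ¬ StrictSub t u

/-- `π'` is a child of `π` in `T`: an immediate successor with no pattern strictly between. -/
def IsChildIn {C F : Type} (T : Set (Tm C F)) (π π' : Tm C F) : Prop :=
  π ∈ T ∧ π' ∈ T ∧ StrictSub π π' ∧
    ¬ ∃ π'' : Tm C F, π''.IsPattern ∧ π''.Linear ∧ StrictSub π π'' ∧ StrictSub π'' π'

/-- `xs` is a list of fresh pairwise distinct variables w.r.t. `π`. -/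
def conAppFresh {C F : Type} (π : Tm C F) (_c : C) (xs : List ℕ) : Prop :=
  xs.Nodup ∧ ∀ x ∈ xs, x ∉ π.vars

/-- `T` is a definitional tree of the finite set `S` of linear patterns. -/
def IsDefTreeOf {C F : Type} (T S : Set (Tm C F)) : Prop :=
  T.Nonempty ∧ T.Finite ∧
  (∀ t ∈ T, t.Linear ∧ t.IsPattern) ∧
  -- Root property
  (∃ π, IsMinimum T π) ∧
  -- Leaves property: the maximal elements of T are exactly the elements of S
  (∀ t ∈ T, (t ∈ S ↔ IsMaximalIn T t)) ∧ S ⊆ T ∧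
  -- Parent property
  (∀ π' ∈ T, ¬ IsMinimum T π' → ∃! π, IsChildIn T π π') ∧
  -- Induction property
  (∀ π ∈ T, ¬ IsMaximalIn T π →
    ∃ (o : List Bool) (x : ℕ), π.subtermAt o = some (Tm.var x) ∧
      (∀ π', IsChildIn T π π' →
        ∃ c xs, conAppFresh π c xs ∧ π' = π.replaceAt o (appVars (Tm.con c) xs)) ∧
      (∀ π₁ π₂, IsChildIn T π π₁ → IsChildIn T π π₂ →
        ∀ c₁ xs₁ c₂ xs₂, π₁ = π.replaceAt o (appVars (Tm.con c₁) xs₁) →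
          π₂ = π.replaceAt o (appVars (Tm.con c₂) xs₂) → c₁ = c₂ → π₁ = π₂))

/-- `T` is a definitional tree for the defined function `f` of the TRS `R`. -/
def IsDefTreeFor {C F : Type} (R : TRS C F) (f : F) (T : Set (Tm C F)) : Prop :=
  ∃ S : Set (Tm C F),
    IsDefTreeOf T S ∧
    (∀ l ∈ S, ∃ lr ∈ R, lr.1.head = Tm.op f ∧ Variant lr.1 l) ∧
    (∀ lr ∈ R, lr.1.head = Tm.op f → ∃ l ∈ S, Variant lr.1 l) ∧
    (∃ xs : List ℕ, xs.Nodup ∧ IsMinimum T (appVars (Tm.op f) xs))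

/-- An inductively sequential TRS: every defined function has a definitional tree. -/
def InductivelySequential {C F : Type} (R : TRS C F) : Prop :=
  LLCB R ∧ ∀ f : F, (∃ r ∈ R, r.1.head = Tm.op f) → ∃ T, IsDefTreeFor R f T

/-- An inductively sequential program: rules together with a fixed definitional
tree for each defined function. -/
structure ISProg (C F : Type) where
  rules : TRS C F
  llcb : LLCB rules
  dt : F → Set (Tm C F)
  dt_ok : ∀ f : F, (∃ r ∈ rules, r.1.head = Tm.op f) → IsDefTreeFor rules f (dt f)

/-- The subtree of `T` whose patterns are the instances of `πi`. -/
def subtree {C F : Type} (T : Set (Tm C F)) (πi : Tm C F) : Set (Tm C F) :=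
  {π' ∈ T | Subsumes πi π'}

/-- `o` is the inductive position of the branch node `π` in `T`. -/
def InductivePosOf {C F : Type} (T : Set (Tm C F)) (π : Tm C F) (o : List Bool) : Prop :=
  (∃ x, π.subtermAt o = some (Tm.var x)) ∧
  ∀ π', IsChildIn T π π' →
    ∃ c xs, conAppFresh π c xs ∧ π' = π.replaceAt o (appVars (Tm.con c) xs)

/- ### The needed narrowing strategy λ -/

/-- The needed narrowing strategy `λ(t, T)`, as a relation: `NN P t T p r φs` means
`(p, r, φₖ ∘ ⋯ ∘ φ₁) ∈ λ(t, T)` with canonical local substitutions `φs` (head first). -/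
inductive NN {C F : Type} (P : ISProg C F) :
    Tm C F → Set (Tm C F) → List Bool → Rule C F → List (Subst C F) → Prop where
  | leaf (t π r : Tm C F)
      (hrule : ∃ lr ∈ P.rules, RuleVariant lr (π, r)) :
      NN P t {π} [] (π, r) [idS]
  | branchVar (t : Tm C F) (T : Set (Tm C F)) (π : Tm C F) (o : List Bool)
      (x : ℕ) (c : C) (xs : List ℕ) (πi : Tm C F) (p : List Bool) (r : Rule C F)
      (φs : List (Subst C F))
      (hmin : IsMinimum T π) (hbr : ¬ IsMaximalIn T π)
      (hip : InductivePosOf T π o)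
      (hchild : IsChildIn T π πi)
      (hfresh : conAppFresh π c xs)
      (hform : πi = π.replaceAt o (appVars (Tm.con c) xs))
      (hvar : t.subtermAt o = some (Tm.var x))
      (hrec : NN P (t.subst (single x (appVars (Tm.con c) xs))) (subtree T πi) p r φs) :
      NN P t T p r (single x (appVars (Tm.con c) xs) :: φs)
  | branchCon (t : Tm C F) (T : Set (Tm C F)) (π : Tm C F) (o : List Bool)
      (u : Tm C F) (c : C) (xs : List ℕ) (πi : Tm C F) (p : List Bool) (r : Rule C F)
      (φs : List (Subst C F))
      (hmin : IsMinimum T π) (hbr : ¬ IsMaximalIn T π)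
      (hip : InductivePosOf T π o)
      (hchild : IsChildIn T π πi)
      (hfresh : conAppFresh π c xs)
      (hform : πi = π.replaceAt o (appVars (Tm.con c) xs))
      (hsub : t.subtermAt o = some u) (hhead : u.head = Tm.con c)
      (hrec : NN P t (subtree T πi) p r φs) :
      NN P t T p r (idS :: φs)
  | branchOp (t : Tm C F) (T : Set (Tm C F)) (π : Tm C F) (o : List Bool)
      (u : Tm C F) (g : F) (p : List Bool) (r : Rule C F) (φs : List (Subst C F))
      (hmin : IsMinimum T π) (hbr : ¬ IsMaximalIn T π)
      (hip : InductivePosOf T π o)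
      (hsub : t.subtermAt o = some u) (hhead : u.head = Tm.op g)
      (hrec : NN P u (P.dt g) p r φs) :
      NN P t T (o ++ p) r (idS :: φs)

/-- `(p, r, σ)` is a needed narrowing step for the operation-rooted term `t`. -/
def NNStepTriple {C F : Type} (P : ISProg C F) (t : Tm C F)
    (p : List Bool) (r : Rule C F) (σ : Subst C F) : Prop :=
  ∃ (f : F) (φs : List (Subst C F)),
    t.head = Tm.op f ∧ NN P t (P.dt f) p r φs ∧ σ = compList φs

/-- One needed narrowing step `t ↝_σ t'`. -/
def NNRed {C F : Type} (P : ISProg C F) (t : Tm C F) (σ : Subst C F) (t' : Tm C F) : Prop :=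
  ∃ p r, NNStepTriple P t p r σ ∧ RewriteAtRule r p (t.subst σ) t'

/-- A needed narrowing derivation `t ↝*_σ t'` with composed answer substitution. -/
inductive NNDeriv {C F : Type} (P : ISProg C F) : Tm C F → Subst C F → Tm C F → Prop where
  | refl (t : Tm C F) : NNDeriv P t idS t
  | step {t t₁ t₂ : Tm C F} {σ τ : Subst C F} :
      NNRed P t σ t₁ → NNDeriv P t₁ τ t₂ → NNDeriv P t (compS σ τ) t₂

/-- The strategy λ yields at most one step for `t` (a deterministic step). -/
def Deterministic {C F : Type} (P : ISProg C F) (t : Tm C F) : Prop :=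
  ∀ p₁ r₁ σ₁ p₂ r₂ σ₂, NNStepTriple P t p₁ r₁ σ₁ → NNStepTriple P t p₂ r₂ σ₂ →
    p₁ = p₂ ∧ r₁ = r₂ ∧ σ₁ = σ₂

/-- Deterministically evaluable: every step in every needed narrowing derivation
issuing from `t` is deterministic. -/
def DetEvaluable {C F : Type} (P : ISProg C F) (t : Tm C F) : Prop :=
  ∀ u σ, NNDeriv P t σ u → Deterministic P u

/- ### Generic narrowing -/

/-- One narrowing step with answer `σ` (at a non-variable position). -/
def NarrowStep {C F : Type} (R : TRS C F) (t : Tm C F) (σ : Subst C F) (t' : Tm C F) : Prop :=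
  ∃ r ∈ R, ∃ (p : List Bool) (u : Tm C F), t.subtermAt p = some u ∧
    (∀ x, u ≠ Tm.var x) ∧ RewriteAtRule r p (t.subst σ) t'

/-- A narrowing derivation with at least one step, composing the answers. -/
inductive NarrowPlus {C F : Type} (R : TRS C F) : Tm C F → Subst C F → Tm C F → Prop where
  | single {t σ t'} : NarrowStep R t σ t' → NarrowPlus R t σ t'
  | cons {t σ t₁ τ t₂} : NarrowStep R t σ t₁ → NarrowPlus R t₁ τ t₂ →
      NarrowPlus R t (compS σ τ) t₂

/- ### Rewrite sequences with explicit step data, and descendants -/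

/-- A rewrite sequence recording the positions and rules of its steps. -/
inductive RewSeq {C F : Type} (R : TRS C F) :
    Tm C F → List (List Bool × Rule C F) → Tm C F → Prop where
  | refl (t : Tm C F) : RewSeq R t [] t
  | step {t t' t'' : Tm C F} {p : List Bool} {r : Rule C F}
      {steps : List (List Bool × Rule C F)} :
      r ∈ R → RewriteAtRule r p t t' → RewSeq R t' steps t'' →
      RewSeq R t ((p, r) :: steps) t''

/-- Descendants of position `v` under a rewrite step at `u` with rule `r`. -/
def descend {C F : Type} (u : List Bool) (r : Rule C F) (v : List Bool) :
    Set (List Bool) :=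
  {w | (¬ u <+: v ∧ w = v) ∨
       (∃ (x : ℕ) (p q p' : List Bool), v = u ++ p ++ q ∧
          r.1.subtermAt p = some (Tm.var x) ∧ r.2.subtermAt p' = some (Tm.var x) ∧
          w = u ++ p' ++ q)}

def descendSet {C F : Type} (s : List Bool × Rule C F) (P : Set (List Bool)) :
    Set (List Bool) :=
  ⋃ v ∈ P, descend s.1 s.2 v

def descendSeq {C F : Type} : List (List Bool × Rule C F) → Set (List Bool) → Set (List Bool)
  | [], P => P
  | s :: ss, P => descendSeq ss (descendSet s P)

/-- Fold a replacement of the subterms at a list of positions by `u`. -/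
def replaceList {C F : Type} (t : Tm C F) (l : List (List Bool)) (u : Tm C F) : Tm C F :=
  l.foldl (fun acc p => acc.replaceAt p u) t

/-- Every subterm at a `P`-position is non-root-stable. -/
def NonRS {C F : Type} (R : TRS C F) (P : Set (List Bool)) (t : Tm C F) : Prop :=
  ∀ q ∈ P, ∀ u, t.subtermAt q = some u → ¬ RootStable R u

/-- A derivation which never root-normalizes any subterm at (descendants of) the
tracked positions. -/
inductive NRN {C F : Type} (R : TRS C F) : Set (List Bool) → Tm C F → Tm C F → Prop where
  | refl {P : Set (List Bool)} {t : Tm C F} (h : NonRS R P t) : NRN R P t t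
  | step {P : Set (List Bool)} {t t' t'' : Tm C F} {p : List Bool} {r : Rule C F}
      (hr : r ∈ R) (hst : RewriteAtRule r p t t') (h0 : NonRS R P t)
      (hrec : NRN R (descendSet (p, r) P) t' t'') : NRN R P t t''

/-- A derivation which never contracts a redex at or below (a descendant of) the
tracked positions. -/
inductive NRI {C F : Type} (R : TRS C F) : Set (List Bool) → Tm C F → Tm C F → Prop where
  | refl {P : Set (List Bool)} {t : Tm C F} : NRI R P t t
  | step {P : Set (List Bool)} {t t' t'' : Tm C F} {p : List Bool} {r : Rule C F}
      (hr : r ∈ R) (hst : RewriteAtRule r p t t')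
      (havoid : ∀ q ∈ P, ¬ q <+: p)
      (hrec : NRI R (descendSet (p, r) P) t' t'') : NRI R P t t''

/-- The redex at position `p` of `t` is root-needed: it (or a descendant) is
contracted in every rewrite sequence from `t` to a root-stable term. -/
def RootNeeded {C F : Type} (R : TRS C F) (t : Tm C F) (p : List Bool) : Prop :=
  (∃ u, t.subtermAt p = some u ∧ IsRedex R u) ∧
  ∀ u, NRI R {p} t u → ¬ RootStable R u

/- ### The outermost-needed strategy φ -/

/-- The outermost-needed redex position `φ(t, T)`, as a relation. -/
inductive Phi {C F : Type} (P : ISProg C F) : Tm C F → Set (Tm C F) → List Bool → Prop where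
  | leaf (t π : Tm C F) : Phi P t {π} []
  | intoChild {t : Tm C F} {T : Set (Tm C F)} {π πi : Tm C F} {p : List Bool}
      (hmin : IsMinimum T π) (hbr : ¬ IsMaximalIn T π)
      (hchild : IsChildIn T π πi) (hsubs : Subsumes πi t)
      (hrec : Phi P t (subtree T πi) p) : Phi P t T p
  | intoOp {t : Tm C F} {T : Set (Tm C F)} {π : Tm C F} {o : List Bool}
      {u : Tm C F} {g : F} {p : List Bool}
      (hmin : IsMinimum T π) (hbr : ¬ IsMaximalIn T π)
      (hip : InductivePosOf T π o)
      (hsub : t.subtermAt o = some u) (hhead : u.head = Tm.op g)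
      (hrec : Phi P u (P.dt g) p) : Phi P t T (o ++ p)

/-- An outermost-needed rewrite sequence with explicit step data. -/
inductive ONSeq {C F : Type} (P : ISProg C F) :
    Tm C F → List (List Bool × Rule C F) → Tm C F → Prop where
  | refl (t : Tm C F) : ONSeq P t [] t
  | step {t t' t'' : Tm C F} {p : List Bool} {r : Rule C F}
      {steps : List (List Bool × Rule C F)}
      (hphi : ∃ f : F, t.head = Tm.op f ∧ Phi P t (P.dt f) p)
      (hr : r ∈ P.rules) (hst : RewriteAtRule r p t t')
      (hrec : ONSeq P t' steps t'') : ONSeq P t ((p, r) :: steps) t''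

/-- A needed narrowing derivation following a given list of positions and rules
(rules up to variants), with composed answer substitution. -/
inductive NNSeq {C F : Type} (P : ISProg C F) :
    Tm C F → List (List Bool × Rule C F) → Subst C F → Tm C F → Prop where
  | refl (t : Tm C F) : NNSeq P t [] idS t
  | step {t t₁ t₂ : Tm C F} {p : List Bool} {r rv : Rule C F} {σ τ : Subst C F}
      {steps : List (List Bool × Rule C F)} (f : F) (φs : List (Subst C F))
      (hhead : t.head = Tm.op f) (hnn : NN P t (P.dt f) p rv φs)
      (hvar : RuleVariant r rv) (hσ : σ = compList φs)
      (hst : RewriteAtRule rv p (t.subst σ) t₁)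
      (hrec : NNSeq P t₁ steps τ t₂) :
      NNSeq P t ((p, r) :: steps) (compS σ τ) t₂

/- ### Needed narrowing trees and partial evaluation -/

/-- `u` admits a needed narrowing step. -/
def CanNarrow {C F : Type} (P : ISProg C F) (u : Tm C F) : Prop :=
  ∃ p r σ u', NNStepTriple P u p r σ ∧ RewriteAtRule r p (u.subst σ) u'

/-- A non-failing leaf: a constructor term or a term which can be narrowed. -/
def NonFailing {C F : Type} (P : ISProg C F) (u : Tm C F) : Prop :=
  u.NoOps ∨ CanNarrow P u

/-- `NNTree P t fr`: `fr` is the frontier (list of leaves, each recorded with its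
number of steps and accumulated substitution) of a finite needed narrowing tree for
`t` in `P`, built by repeatedly expanding a leaf by all its needed narrowing steps. -/
inductive NNTree {C F : Type} (P : ISProg C F) :
    Tm C F → List (ℕ × Subst C F × Tm C F) → Prop where
  | root (t : Tm C F) : NNTree P t [(0, idS, t)]
  | expand {t : Tm C F} {pre post : List (ℕ × Subst C F × Tm C F)}
      {n : ℕ} {σ : Subst C F} {u : Tm C F}
      (succs : List (ℕ × Subst C F × Tm C F))
      (htree : NNTree P t (pre ++ (n, σ, u) :: post))
      (hsucc : ∀ e, e ∈ succs ↔ ∃ p r σ' u', NNStepTriple P u p r σ' ∧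
          RewriteAtRule r p (u.subst σ') u' ∧ e = (n + 1, compS σ σ', u')) :
      NNTree P t (pre ++ succs ++ post)

/-- The resultants extracted from the non-failing leaves reached in at least one step. -/
def Resultants {C F : Type} (P : ISProg C F) (t : Tm C F)
    (fr : List (ℕ × Subst C F × Tm C F)) : TRS C F :=
  {lr | ∃ e ∈ fr, 0 < e.1 ∧ NonFailing P e.2.2 ∧ lr = (t.subst e.2.1, e.2.2)}

/- ### Independent renamings and closedness -/

/-- The renamed call `ρ(s) = f_s(x₁,…,xₙ)`. -/
def rhoTm {C F : Type} (fsym : Tm C F → F) (s : Tm C F) : Tm C F :=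
  appVars (Tm.op (fsym s)) s.varList

/-- `fsym` gives an independent renaming of `S`: fresh pairwise distinct symbols. -/
def IndepRenaming {C F : Type} (S : Set (Tm C F)) (fsym : Tm C F → F) : Prop :=
  Set.InjOn fsym S ∧ ∀ s ∈ S, ∀ u ∈ S, fsym s ∉ u.opsIn

def rhoSet {C F : Type} (S : Set (Tm C F)) (fsym : Tm C F → F) : Set (Tm C F) :=
  (rhoTm fsym) '' S

/-- Closedness of a term w.r.t. a set of calls `S`. -/
inductive Closed {C F : Type} (S : Set (Tm C F)) : Tm C F → Prop where
  | var (x : ℕ) : Closed S (Tm.var x)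
  | con (c : C) : Closed S (Tm.con c)
  | app {s t : Tm C F} (hc : ∃ c : C, s.head = Tm.con c)
      (hs : Closed S s) (ht : Closed S t) : Closed S (Tm.app s t)
  | inst {s : Tm C F} (θ : Subst C F) (hs : s ∈ S)
      (hθ : ∀ x ∈ s.vars, Closed S (θ x)) : Closed S (s.subst θ)

/-- The (non-deterministic) renaming function `ren_ρ`, as a relation. -/
inductive Ren {C F : Type} (S : Set (Tm C F)) (fsym : Tm C F → F) :
    Tm C F → Tm C F → Prop where
  | var (x : ℕ) : Ren S fsym (Tm.var x) (Tm.var x)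
  | con (c : C) : Ren S fsym (Tm.con c) (Tm.con c)
  | app {s t s' t' : Tm C F} (hc : ∃ c : C, s.head = Tm.con c)
      (hs : Ren S fsym s s') (ht : Ren S fsym t t') :
      Ren S fsym (Tm.app s t) (Tm.app s' t')
  | inst {s : Tm C F} (θ θ' : Subst C F) (hs : s ∈ S)
      (hθ : ∀ x ∈ s.vars, Ren S fsym (θ x) (θ' x)) :
      Ren S fsym (s.subst θ) ((rhoTm fsym s).subst θ')
  | other {t : Tm C F} (hop : t.OpRooted)
      (hni : ¬ ∃ s ∈ S, ∃ θ : Subst C F, t = s.subst θ) :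
      Ren S fsym t t

section Aux

variable {C F : Type}

lemma subst_idS (t : Tm C F) : t.subst idS = t := by
  induction t with
  | var x => rfl
  | con c => rfl
  | op f => rfl
  | app s t ihs iht => simp [Tm.subst, ihs, iht]

lemma subst_subst (t : Tm C F) (σ τ : Subst C F) :
    (t.subst σ).subst τ = t.subst (compS σ τ) := by
  induction t with
  | var x => rfl
  | con c => rfl
  | op f => rfl
  | app s t ihs iht => simp [Tm.subst, ihs, iht]

lemma compList_cons (φ : Subst C F) (φs : List (Subst C F)) :
    compList (φ :: φs) = compS φ (compList φs) := by
  funext x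
  have key : ∀ (l : List (Subst C F)) (s : Tm C F),
      l.foldl (fun t ψ => t.subst ψ) s = s.subst (compList l) := by
    intro l
    induction l with
    | nil => intro s; exact (subst_idS s).symm
    | cons ψ l ih =>
      intro s
      show l.foldl _ (s.subst ψ) = _
      rw [ih (s.subst ψ), subst_subst]
      congr 1
      funext y
      exact (ih (ψ y)).symm
  show (φ :: φs).foldl (fun t ψ => t.subst ψ) (Tm.var x) = (φ x).subst (compList φs)
  simp only [List.foldl_cons]
  have : (Tm.var x : Tm C F).subst φ = φ x := rfl
  rw [this] at *
  exact key φs (φ x)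

lemma subst_compList_cons (t : Tm C F) (φ : Subst C F) (φs : List (Subst C F)) :
    t.subst (compList (φ :: φs)) = (t.subst φ).subst (compList φs) := by
  rw [compList_cons, subst_subst]

lemma vars_subtermAt : ∀ (p : List Bool) (t u : Tm C F),
    t.subtermAt p = some u → u.vars ⊆ t.vars := by
  intro p
  induction p with
  | nil => intro t u h; simp [Tm.subtermAt] at h; subst h; exact subset_rfl
  | cons b p ih =>
    intro t u h
    cases t with
    | app s t' =>
      cases b with
      | false =>
        simp only [Tm.subtermAt] at h
        exact (ih s u h).trans (Set.subset_union_left)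
      | true =>
        simp only [Tm.subtermAt] at h
        exact (ih t' u h).trans (Set.subset_union_right)
    | var x => simp [Tm.subtermAt] at h
    | con c => simp [Tm.subtermAt] at h
    | op f => simp [Tm.subtermAt] at h

lemma subtermAt_subst : ∀ (p : List Bool) (t u : Tm C F) (σ : Subst C F),
    t.subtermAt p = some u → (t.subst σ).subtermAt p = some (u.subst σ) := by
  intro p
  induction p with
  | nil =>
    intro t u σ h
    simp [Tm.subtermAt] at h
    subst h
    simp [Tm.subtermAt]
  | cons b p ih =>
    intro t u σ h
    cases t with
    | app s t' =>
      cases b with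
      | false => simp only [Tm.subtermAt] at h ⊢; exact ih s u σ h
      | true => simp only [Tm.subtermAt] at h ⊢; exact ih t' u σ h
    | var x => simp [Tm.subtermAt] at h
    | con c => simp [Tm.subtermAt] at h
    | op f => simp [Tm.subtermAt] at h

lemma stmt1_aux {P : ISProg C F} {t : Tm C F} {T : Set (Tm C F)}
    {p : List Bool} {r : Rule C F} {φs : List (Subst C F)}
    (hnn : NN P t T p r φs) :
    ∀ i, i < φs.length →
      φs.getD i idS = idS ∨
      ∃ (x : ℕ) (c : C) (xs : List ℕ), xs.Nodup ∧
        φs.getD i idS = single x (appVars (Tm.con c) xs) ∧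
        x ∈ (t.subst (compList (φs.take i))).vars := by
  induction hnn with
  | leaf t π r hrule =>
    intro i hi
    cases i with
    | zero => exact Or.inl rfl
    | succ n => simp [List.length] at hi
  | branchVar t T π o x c xs πi p r φs hmin hbr hip hchild hfresh hform hvar hrec ih =>
    intro i hi
    cases i with
    | zero =>
      right
      refine ⟨x, c, xs, hfresh.1, rfl, ?_⟩
      simp only [List.take_zero]
      have : t.subst (compList []) = t := subst_idS t
      rw [this]
      exact vars_subtermAt o t (Tm.var x) hvar rfl
    | succ i =>
      simp only [List.length_cons, Nat.succ_lt_succ_iff] at hi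
      rcases ih i hi with h | ⟨y, c', xs', hnd, heq, hmem⟩
      · exact Or.inl h
      · right
        refine ⟨y, c', xs', hnd, heq, ?_⟩
        simp only [List.take_succ_cons]
        rw [subst_compList_cons]
        exact hmem
  | branchCon t T π o u c xs πi p r φs hmin hbr hip hchild hfresh hform hsub hhead hrec ih =>
    intro i hi
    cases i with
    | zero => exact Or.inl rfl
    | succ i =>
      simp only [List.length_cons, Nat.succ_lt_succ_iff] at hi
      rcases ih i hi with h | ⟨y, c', xs', hnd, heq, hmem⟩
      · exact Or.inl h
      · right
        refine ⟨y, c', xs', hnd, heq, ?_⟩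
        simp only [List.take_succ_cons]
        rw [subst_compList_cons, subst_idS]
        exact hmem
  | branchOp t T π o u g p r φs hmin hbr hip hsub hhead hrec ih =>
    intro i hi
    cases i with
    | zero => exact Or.inl rfl
    | succ i =>
      simp only [List.length_cons, Nat.succ_lt_succ_iff] at hi
      rcases ih i hi with h | ⟨y, c', xs', hnd, heq, hmem⟩
      · exact Or.inl h
      · right
        refine ⟨y, c', xs', hnd, heq, ?_⟩
        simp only [List.take_succ_cons]
        rw [subst_compList_cons, subst_idS]
        have := subtermAt_subst o t u (compList (List.take i φs)) hsub
        exact vars_subtermAt o _ _ this hmem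

end Aux

/-- each local substitution in the canonical representation of a
needed narrowing step is the identity or a single-variable binding
`{x ↦ c(x₁,…,xₙ)}` with `x` occurring in `(φ_{i-1} ∘ ⋯ ∘ φ₁)(t)`. -/
theorem stmt1 {C F : Type} (P : ISProg C F) (t : Tm C F) (T : Set (Tm C F))
    (p : List Bool) (r : Rule C F) (φs : List (Subst C F))
    (hop : t.OpRooted)
    (hdt : ∃ S : Set (Tm C F), IsDefTreeOf T S)
    (hpt : ∃ π, IsMinimum T π ∧ Subsumes π t)
    (hnn : NN P t T p r φs) :
    ∀ i, i < φs.length →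
      φs.getD i idS = idS ∨
      ∃ (x : ℕ) (c : C) (xs : List ℕ), xs.Nodup ∧
        φs.getD i idS = single x (appVars (Tm.con c) xs) ∧
        x ∈ (t.subst (compList (φs.take i))).vars :=
  stmt1_aux hnn

end PE
end

section
/- In an almost orthogonal TRS, if t is root-stable and s rewrites to t using only steps at non-root positions (s →*_{>Λ} t), then s is root-stable. -/
namespace PE

namespace Stmt8Aux

variable {C F : Type}

@[simp] lemma subtermAt_nil (t : Tm C F) : t.subtermAt [] = some t := by
  cases t <;> rfl

@[simp] lemma replaceAt_nil (t u : Tm C F) : t.replaceAt [] u = u := by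
  cases t <;> rfl

lemma mem_vars_iff_varCount {t : Tm C F} {y : ℕ} : y ∈ t.vars ↔ 0 < t.varCount y := by
  induction t with
  | var x =>
      simp only [Tm.vars, Set.mem_singleton_iff, Tm.varCount]
      by_cases h : x = y
      · subst h; simp
      · simp [h, Ne.symm h]
  | con c => simp [Tm.vars, Tm.varCount]
  | op f => simp [Tm.vars, Tm.varCount]
  | app a b iha ihb => simp [Tm.vars, Tm.varCount, iha, ihb] <;> omega

lemma linear_app {a b : Tm C F} (h : (Tm.app a b).Linear) :
    a.Linear ∧ b.Linear ∧ ∀ y ∈ a.vars, y ∉ b.vars := by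
  refine ⟨fun y => ?_, fun y => ?_, fun y hy hy' => ?_⟩
  · have := h y; simp [Tm.varCount] at this; omega
  · have := h y; simp [Tm.varCount] at this; omega
  · have := h y
    rw [mem_vars_iff_varCount] at hy hy'
    simp [Tm.varCount] at this; omega

lemma subst_congr {t : Tm C F} {σ τ : Subst C F} (h : ∀ y ∈ t.vars, σ y = τ y) :
    t.subst σ = t.subst τ := by
  induction t with
  | var x => exact h x (by simp [Tm.vars])
  | con c => rfl
  | op f => rfl
  | app a b iha ihb =>
      simp only [Tm.subst]
      rw [iha fun y hy => h y (by simp [Tm.vars, hy]),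
          ihb fun y hy => h y (by simp [Tm.vars, hy])]

lemma subterm_var_mem : ∀ (p : List Bool) (l : Tm C F) (z : ℕ),
    l.subtermAt p = some (Tm.var z) → z ∈ l.vars := by
  intro p
  induction p with
  | nil => intro l z h; simp at h; subst h; simp [Tm.vars]
  | cons c p ih =>
      intro l z h
      cases l with
      | var x => simp [Tm.subtermAt] at h
      | con c' => simp [Tm.subtermAt] at h
      | op f => simp [Tm.subtermAt] at h
      | app a b =>
          cases c with
          | false => exact Set.mem_union_left _ (ih a z h)
          | true => exact Set.mem_union_right _ (ih b z h)

/-- Parallel reduction. -/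
inductive Par (R : TRS C F) : Tm C F → Tm C F → Prop
  | refl (t) : Par R t t
  | app {a a' b b'} (ha : Par R a a') (hb : Par R b b') :
      Par R (Tm.app a b) (Tm.app a' b')
  | red {a b : Tm C F} {r : Rule C F} {σ τ : Subst C F} (hr : r ∈ R)
      (h : ∀ x, Par R (σ x) (τ x)) (ha : a = r.1.subst σ) (hb : b = r.2.subst τ) :
      Par R a b

lemma par_subst {R : TRS C F} {σ τ : Subst C F} (h : ∀ x, Par R (σ x) (τ x)) :
    ∀ m : Tm C F, Par R (m.subst σ) (m.subst τ) := by
  intro m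
  induction m with
  | var x => exact h x
  | con c => exact Par.refl _
  | op f => exact Par.refl _
  | app a b iha ihb => exact Par.app iha ihb

lemma par_of_rar {R : TRS C F} {r : Rule C F} (hr : r ∈ R) :
    ∀ (p : List Bool) (a b : Tm C F), RewriteAtRule r p a b → Par R a b := by
  intro p
  induction p with
  | nil =>
      rintro a b ⟨σ, h1, h2⟩
      simp at h1 h2
      exact Par.red hr (fun x => Par.refl _) h1 h2
  | cons c p ih =>
      rintro a b ⟨σ, h1, h2⟩
      cases a with
      | var x => simp [Tm.subtermAt] at h1
      | con c' => simp [Tm.subtermAt] at h1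
      | op f => simp [Tm.subtermAt] at h1
      | app s u =>
          cases c with
          | false =>
              simp [Tm.subtermAt] at h1
              simp [Tm.replaceAt] at h2
              subst h2
              exact Par.app (ih s _ ⟨σ, h1, rfl⟩) (Par.refl _)
          | true =>
              simp [Tm.subtermAt] at h1
              simp [Tm.replaceAt] at h2
              subst h2
              exact Par.app (Par.refl _) (ih u _ ⟨σ, h1, rfl⟩)

lemma par_of_rew {R : TRS C F} {a b : Tm C F} (h : Rew R a b) : Par R a b := by
  obtain ⟨r, hr, p, hrar⟩ := h
  exact par_of_rar hr p a b hrar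

lemma rew_app_left {R : TRS C F} {a b : Tm C F} (y : Tm C F) (h : Rew R a b) :
    Rew R (Tm.app a y) (Tm.app b y) := by
  obtain ⟨r, hr, p, σ, h1, h2⟩ := h
  exact ⟨r, hr, false :: p, σ, by simpa [Tm.subtermAt] using h1,
    by simp [Tm.replaceAt, ← h2]⟩

lemma rew_app_right {R : TRS C F} {a b : Tm C F} (y : Tm C F) (h : Rew R a b) :
    Rew R (Tm.app y a) (Tm.app y b) := by
  obtain ⟨r, hr, p, σ, h1, h2⟩ := h
  exact ⟨r, hr, true :: p, σ, by simpa [Tm.subtermAt] using h1,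
    by simp [Tm.replaceAt, ← h2]⟩

lemma rewstar_app_left {R : TRS C F} {a b : Tm C F} (y : Tm C F) (h : RewStar R a b) :
    RewStar R (Tm.app a y) (Tm.app b y) :=
  Relation.ReflTransGen.lift (fun z => Tm.app z y) (fun _ _ hab => rew_app_left y hab) _ _ h

lemma rewstar_app_right {R : TRS C F} {a b : Tm C F} (y : Tm C F) (h : RewStar R a b) :
    RewStar R (Tm.app y a) (Tm.app y b) :=
  Relation.ReflTransGen.lift (fun z => Tm.app y z) (fun _ _ hab => rew_app_right y hab) _ _ h

lemma rewstar_subst {R : TRS C F} {σ τ : Subst C F} (h : ∀ x, RewStar R (σ x) (τ x)) :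
    ∀ m : Tm C F, RewStar R (m.subst σ) (m.subst τ) := by
  intro m
  induction m with
  | var x => exact h x
  | con c => exact Relation.ReflTransGen.refl
  | op f => exact Relation.ReflTransGen.refl
  | app a b iha ihb =>
      exact (rewstar_app_left _ iha).trans (rewstar_app_right _ ihb)

/-- Decomposition of a position in an instance `l.subst σ`. -/
lemma decomp {R : TRS C F} : ∀ (q : List Bool) (l : Tm C F) (σ : Subst C F) (w : Tm C F),
    (l.subst σ).subtermAt q = some w →
    (∃ p₁ z b, q = p₁ ++ b ∧ l.subtermAt p₁ = some (Tm.var z) ∧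
      (σ z).subtermAt b = some w) ∨
    (∃ m, l.subtermAt q = some m ∧ (∀ x, m ≠ Tm.var x) ∧ w = m.subst σ) := by
  intro q
  induction q with
  | nil =>
      intro l σ w h
      simp at h
      cases l with
      | var z => exact Or.inl ⟨[], z, [], rfl, rfl, by simpa [Tm.subst] using h⟩
      | con c => exact Or.inr ⟨_, rfl, by simp, h.symm⟩
      | op f => exact Or.inr ⟨_, rfl, by simp, h.symm⟩
      | app a b => exact Or.inr ⟨_, rfl, by simp, h.symm⟩
  | cons c q ih =>
      intro l σ w h
      cases l with
      | var z => exact Or.inl ⟨[], z, c :: q, rfl, rfl, by simpa [Tm.subst] using h⟩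
      | con c' => simp [Tm.subst, Tm.subtermAt] at h
      | op f => simp [Tm.subst, Tm.subtermAt] at h
      | app a b =>
          cases c with
          | false =>
              simp only [Tm.subst, Tm.subtermAt] at h
              rcases ih a σ w h with ⟨p₁, z, bb, hq, h1, h2⟩ | ⟨m, h1, h2, h3⟩
              · exact Or.inl ⟨false :: p₁, z, bb, by simp [hq], h1, h2⟩
              · exact Or.inr ⟨m, h1, h2, h3⟩
          | true =>
              simp only [Tm.subst, Tm.subtermAt] at h
              rcases ih b σ w h with ⟨p₁, z, bb, hq, h1, h2⟩ | ⟨m, h1, h2, h3⟩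
              · exact Or.inl ⟨true :: p₁, z, bb, by simp [hq], h1, h2⟩
              · exact Or.inr ⟨m, h1, h2, h3⟩

/-- Replacement through a variable position of a linear term. -/
lemma replace_through_var : ∀ (p₁ : List Bool) (l : Tm C F) (z : ℕ),
    l.subtermAt p₁ = some (Tm.var z) → l.Linear →
    ∀ (σ : Subst C F) (b : List Bool) (m' : Tm C F),
    (l.subst σ).replaceAt (p₁ ++ b) m' =
      l.subst (fun y => if y = z then (σ z).replaceAt b m' else σ y) := by
  intro p₁
  induction p₁ with
  | nil =>
      intro l z h _ σ b m'
      simp at h; subst h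
      simp [Tm.subst]
  | cons c p₁ ih =>
      intro l z h hlin σ b m'
      cases l with
      | var x => simp [Tm.subtermAt] at h
      | con c' => simp [Tm.subtermAt] at h
      | op f => simp [Tm.subtermAt] at h
      | app l₁ l₂ =>
          obtain ⟨hl1, hl2, hdisj⟩ := linear_app hlin
          cases c with
          | false =>
              simp only [Tm.subtermAt] at h
              have hz : z ∈ l₁.vars := subterm_var_mem _ _ _ h
              simp only [Tm.subst, List.cons_append, Tm.replaceAt, List.append_eq]
              rw [ih l₁ z h hl1 σ b m']
              congr 1
              exact (subst_congr fun y hy => by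
                have : y ≠ z := fun he => hdisj z hz (he ▸ hy)
                simp [this]).symm
          | true =>
              simp only [Tm.subtermAt] at h
              have hz : z ∈ l₂.vars := subterm_var_mem _ _ _ h
              simp only [Tm.subst, List.cons_append, Tm.replaceAt, List.append_eq]
              rw [ih l₂ z h hl2 σ b m']
              congr 1
              exact (subst_congr fun y hy => by
                have : y ≠ z := fun he => hdisj y hy (he ▸ hz)
                simp [this]).symm

section Main

variable {R : TRS C F} (hao : AlmostOrthogonal R)
  (hnv : ∀ r ∈ R, ∀ x, r.1 ≠ Tm.var x)

include hao in
/-- No redex strictly inside the pattern of a lhs. -/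
lemma no_inner {r : Rule C F} (hr : r ∈ R) {p : List Bool} (hp : p ≠ [])
    {u : Tm C F} (hsub : r.1.subtermAt p = some u) (hnvu : ∀ x, u ≠ Tm.var x)
    (σ' : Subst C F) : ¬ IsRedex R (u.subst σ') := by
  rintro ⟨r', hr', σ'', he⟩
  exact hp (hao.2 r hr r' hr' p u σ' σ'' hsub hnvu he).1

include hao in
/-- Parallel reducts of instances of "inert" linear terms are instances. -/
lemma instE : ∀ (l : Tm C F), l.Linear →
    (∀ p u, l.subtermAt p = some u → (∀ x, u ≠ Tm.var x) →
      ∀ σ' : Subst C F, ¬ IsRedex R (u.subst σ')) →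
    ∀ (τ : Subst C F) (w : Tm C F), Par R (l.subst τ) w →
    ∃ τ' : Subst C F, w = l.subst τ' ∧ (∀ y, y ∉ l.vars → τ' y = τ y) ∧
      (∀ y, Par R (τ y) (τ' y)) := by
  classical
  intro l
  induction l with
  | var x =>
      intro _ _ τ w hP
      refine ⟨fun y => if y = x then w else τ y, by simp [Tm.subst], ?_, ?_⟩
      · intro y hy
        have : y ≠ x := by simpa [Tm.vars] using hy
        simp [this]
      · intro y
        by_cases hyx : y = x
        · subst hyx; simpa [Tm.subst] using hP
        · simp [hyx]; exact Par.refl _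
  | con c =>
      intro _ hin τ w hP
      cases hP with
      | refl => exact ⟨τ, rfl, fun _ _ => rfl, fun _ => Par.refl _⟩
      | red hr h ha hb =>
          exact absurd (show IsRedex R ((Tm.con c).subst τ) from ⟨_, hr, _, ha⟩)
            (hin [] (Tm.con c) (by simp) (by simp) τ)
  | op f =>
      intro _ hin τ w hP
      cases hP with
      | refl => exact ⟨τ, rfl, fun _ _ => rfl, fun _ => Par.refl _⟩
      | red hr h ha hb =>
          exact absurd (show IsRedex R ((Tm.op f).subst τ) from ⟨_, hr, _, ha⟩)
            (hin [] (Tm.op f) (by simp) (by simp) τ)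
  | app l₁ l₂ ih₁ ih₂ =>
      intro hlin hin τ w hP
      obtain ⟨hl1, hl2, hdisj⟩ := linear_app hlin
      have hP' : Par R (Tm.app (l₁.subst τ) (l₂.subst τ)) w := by
        simpa [Tm.subst] using hP
      cases hP' with
      | refl => exact ⟨τ, by simp [Tm.subst], fun _ _ => rfl, fun _ => Par.refl _⟩
      | red hr h ha hb =>
          exact absurd (show IsRedex R ((Tm.app l₁ l₂).subst τ) from
              ⟨_, hr, _, by simpa [Tm.subst] using ha⟩)
            (hin [] (Tm.app l₁ l₂) (by simp) (by simp) τ)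
      | app hpa hpb =>
          obtain ⟨τ₁, he₁, ho₁, hp₁⟩ := ih₁ hl1
            (fun p u hs hn σ' => hin (false :: p) u (by simpa [Tm.subtermAt] using hs) hn σ')
            τ _ hpa
          obtain ⟨τ₂, he₂, ho₂, hp₂⟩ := ih₂ hl2
            (fun p u hs hn σ' => hin (true :: p) u (by simpa [Tm.subtermAt] using hs) hn σ')
            τ _ hpb
          refine ⟨fun y => if y ∈ l₁.vars then τ₁ y else τ₂ y, ?_, ?_, ?_⟩
          · simp only [Tm.subst]
            rw [he₁, he₂]
            congr 1
            · exact (subst_congr fun y hy => by simp [hy]).symm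
            · exact (subst_congr fun y hy => by simp [show y ∉ l₁.vars from fun hy1 => hdisj y hy1 hy]).symm
          · intro y hy
            simp only [Tm.vars, Set.mem_union, not_or] at hy
            simp [hy.1, ho₂ y hy.2]
          · intro y
            by_cases hy : y ∈ l₁.vars
            · simp only [hy, if_pos]; exact hp₁ y
            · simp only [hy, if_neg, if_false]; exact hp₂ y

include hao hnv in
/-- Two ways to see `app x y` as a redex-parallel pair: the parallel reduct is
still an instance of the same lhs. -/
lemma redex_par {r : Rule C F} (hr : r ∈ R) {x y x' y' : Tm C F} {τ : Subst C F}
    (hx : Par R x x') (hy : Par R y y') (he : Tm.app x y = r.1.subst τ) :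
    ∃ τ' : Subst C F, Tm.app x' y' = r.1.subst τ' ∧ ∀ z, Par R (τ z) (τ' z) := by
  classical
  obtain ⟨l₁, l₂, hl⟩ : ∃ l₁ l₂, r.1 = Tm.app l₁ l₂ := by
    cases hrl : r.1 with
    | var z => exact absurd hrl (hnv r hr z)
    | con c => rw [hrl] at he; simp [Tm.subst] at he
    | op f => rw [hrl] at he; simp [Tm.subst] at he
    | app l₁ l₂ => exact ⟨l₁, l₂, rfl⟩
  rw [hl] at he
  rw [hl]
  have hlin : (Tm.app l₁ l₂).Linear := hl ▸ hao.1 r hr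
  simp only [Tm.subst] at he
  obtain ⟨hex, hey⟩ : x = l₁.subst τ ∧ y = l₂.subst τ := by
    cases he; exact ⟨rfl, rfl⟩
  obtain ⟨hl1, hl2, hdisj⟩ := linear_app hlin
  obtain ⟨τ₁, he₁, ho₁, hp₁⟩ := instE hao l₁ hl1
    (fun p u hs hn σ' => no_inner hao hr (p := false :: p) (by simp)
      (by rw [hl]; simpa [Tm.subtermAt] using hs) hn σ') τ x' (hex ▸ hx)
  obtain ⟨τ₂, he₂, ho₂, hp₂⟩ := instE hao l₂ hl2
    (fun p u hs hn σ' => no_inner hao hr (p := true :: p) (by simp)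
      (by rw [hl]; simpa [Tm.subtermAt] using hs) hn σ') τ y' (hey ▸ hy)
  refine ⟨fun z => if z ∈ l₁.vars then τ₁ z else τ₂ z, ?_, ?_⟩
  · simp only [Tm.subst]
    rw [he₁, he₂]
    congr 1
    · exact (subst_congr fun z hz => by simp [hz]).symm
    · exact (subst_congr fun z hz => by
        simp [show z ∉ l₁.vars from fun hz1 => hdisj z hz1 hz]).symm
  · intro z
    by_cases hz : z ∈ l₁.vars
    · simp only [hz, if_pos]; exact hp₁ z
    · simp only [hz, if_neg, if_false]; exact hp₂ z

include hao hnv in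
/-- Commutation: a parallel step followed by a single step. -/
lemma commute : ∀ {a w : Tm C F}, Par R a w → ∀ a₁, Rew R a a₁ →
    ∃ w₁, RewStar R w w₁ ∧ Par R a₁ w₁ := by
  classical
  intro a w hP
  induction hP with
  | refl t =>
      intro a₁ hstep
      exact ⟨a₁, Relation.ReflTransGen.single hstep, Par.refl _⟩
  | app hpa hpb iha ihb =>
      rename_i x x' y y'
      rintro a₁ ⟨r₃, hr₃, p, σ₃, h1, h2⟩
      cases p with
      | nil =>
          simp at h1 h2
          obtain ⟨τ', he', hpt⟩ := redex_par hao hnv hr₃ hpa hpb h1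
          refine ⟨r₃.2.subst τ', Relation.ReflTransGen.single
            ⟨r₃, hr₃, [], τ', by simp [he'], by simp⟩, ?_⟩
          subst h2
          exact par_subst hpt r₃.2
      | cons c p' =>
          cases c with
          | false =>
              simp only [Tm.subtermAt] at h1
              simp only [Tm.replaceAt] at h2
              obtain ⟨x₁', hs', hp'⟩ := iha (x.replaceAt p' (r₃.2.subst σ₃))
                ⟨r₃, hr₃, p', σ₃, h1, rfl⟩
              subst h2
              exact ⟨Tm.app x₁' y', rewstar_app_left _ hs', Par.app hp' hpb⟩
          | true =>
              simp only [Tm.subtermAt] at h1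
              simp only [Tm.replaceAt] at h2
              obtain ⟨y₁', hs', hp'⟩ := ihb (y.replaceAt p' (r₃.2.subst σ₃))
                ⟨r₃, hr₃, p', σ₃, h1, rfl⟩
              subst h2
              exact ⟨Tm.app x' y₁', rewstar_app_right _ hs', Par.app hpa hp'⟩
  | red hr'' h ha hb ih =>
      rename_i a' w' r'' σ τ
      rintro a₁ ⟨r₃, hr₃, p, σ₃, h1, h2⟩
      cases p with
      | nil =>
          simp at h1 h2
          have heq : r''.1.subst σ = r₃.1.subst σ₃ := ha.symm.trans h1
          have he2 := (hao.2 r'' hr'' r₃ hr₃ [] r''.1 σ σ₃ (by simp)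
            (hnv r'' hr'') heq).2
          refine ⟨w', Relation.ReflTransGen.refl, ?_⟩
          rw [h2, ← he2, hb]
          exact par_subst h r''.2
      | cons c p' =>
          rw [ha] at h1
          rcases decomp (R := R) _ r''.1 σ _ h1 with
            ⟨p₁, z, b, hq, hsv, hsb⟩ | ⟨m, hm1, hm2, hm3⟩
          · have hstepz : Rew R (σ z) ((σ z).replaceAt b (r₃.2.subst σ₃)) :=
              ⟨r₃, hr₃, b, σ₃, hsb, rfl⟩
            obtain ⟨mz, hms, hmp⟩ := ih z _ hstepz
            have ha1 : a₁ = r''.1.subst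
                (fun y => if y = z then (σ z).replaceAt b (r₃.2.subst σ₃) else σ y) := by
              rw [h2, ha, hq, replace_through_var p₁ r''.1 z hsv (hao.1 r'' hr'') σ b _]
            refine ⟨r''.2.subst (fun y => if y = z then mz else τ y), ?_, ?_⟩
            · rw [hb]
              refine rewstar_subst (fun y => ?_) r''.2
              by_cases hyz : y = z
              · subst hyz; simpa using hms
              · simp only [hyz, if_false]; exact Relation.ReflTransGen.refl
            · refine Par.red hr'' (fun y => ?_) ha1 rfl
              by_cases hyz : y = z
              · subst hyz; simpa using hmp
              · simp only [hyz, if_false]; exact h y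
          · exact absurd ⟨r₃, hr₃, σ₃, hm3.symm⟩
              (no_inner hao hr'' (p := c :: p') (by simp) hm1 hm2 σ)

/-- Parallel reduction strictly below the root. -/
def PI (R : TRS C F) (u w : Tm C F) : Prop :=
  u = w ∨ ∃ a b a' b', u = Tm.app a b ∧ w = Tm.app a' b' ∧ Par R a a' ∧ Par R b b'

include hao hnv in
lemma pi_redex {u w : Tm C F} (hpi : PI R u w) (hred : IsRedex R u) : IsRedex R w := by
  rcases hpi with rfl | ⟨a, b, a', b', rfl, rfl, hpa, hpb⟩
  · exact hred
  · obtain ⟨r, hr, τ, he⟩ := hred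
    obtain ⟨τ', he', _⟩ := redex_par hao hnv hr hpa hpb he
    exact ⟨r, hr, τ', he'⟩

include hao hnv in
lemma pi_step {v w v₁ : Tm C F} (hpi : PI R v w) (hstep : Rew R v v₁)
    (hnred : ¬ IsRedex R w) :
    ∃ w₁, RewStar R w w₁ ∧ PI R v₁ w₁ := by
  obtain ⟨r₃, hr₃, p, σ₃, h1, h2⟩ := hstep
  cases p with
  | nil =>
      simp at h1
      exact absurd (pi_redex hao hnv hpi ⟨r₃, hr₃, σ₃, h1⟩) hnred
  | cons c p' =>
      cases v with
      | var x => simp [Tm.subtermAt] at h1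
      | con c' => simp [Tm.subtermAt] at h1
      | op f => simp [Tm.subtermAt] at h1
      | app a b =>
          rcases hpi with rfl | ⟨a₀, b₀, a', b', heq, rfl, hpa, hpb⟩
          · exact ⟨v₁, Relation.ReflTransGen.single ⟨r₃, hr₃, c :: p', σ₃, h1, h2⟩,
              Or.inl rfl⟩
          · obtain ⟨rfl, rfl⟩ : a₀ = a ∧ b₀ = b := by cases heq; exact ⟨rfl, rfl⟩
            cases c with
            | false =>
                simp only [Tm.subtermAt] at h1
                simp only [Tm.replaceAt] at h2
                obtain ⟨a₁', hs', hp'⟩ := commute hao hnv hpa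
                  _ ⟨r₃, hr₃, p', σ₃, h1, rfl⟩
                exact ⟨Tm.app a₁' b', rewstar_app_left _ hs',
                  Or.inr ⟨_, _, _, _, h2, rfl, hp', hpb⟩⟩
            | true =>
                simp only [Tm.subtermAt] at h1
                simp only [Tm.replaceAt] at h2
                obtain ⟨b₁', hs', hp'⟩ := commute hao hnv hpb
                  _ ⟨r₃, hr₃, p', σ₃, h1, rfl⟩
                exact ⟨Tm.app a' b₁', rewstar_app_right _ hs',
                  Or.inr ⟨_, _, _, _, h2, rfl, hpa, hp'⟩⟩

include hao hnv in
lemma step_back {s t : Tm C F} (hrs : RootStable R t) (h : InnerRew R s t) :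
    RootStable R s := by
  have hpist : PI R s t := by
    obtain ⟨r, hr, p, hp, σ, h1, h2⟩ := h
    cases p with
    | nil => exact absurd rfl hp
    | cons c p' =>
        cases s with
        | var x => simp [Tm.subtermAt] at h1
        | con c' => simp [Tm.subtermAt] at h1
        | op f => simp [Tm.subtermAt] at h1
        | app a b =>
            cases c with
            | false =>
                simp only [Tm.subtermAt] at h1
                simp only [Tm.replaceAt] at h2
                exact Or.inr ⟨a, b, _, b, rfl, h2,
                  par_of_rar hr p' a _ ⟨σ, h1, rfl⟩, Par.refl _⟩
            | true =>
                simp only [Tm.subtermAt] at h1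
                simp only [Tm.replaceAt] at h2
                exact Or.inr ⟨a, b, a, _, rfl, h2,
                  Par.refl _, par_of_rar hr p' b _ ⟨σ, h1, rfl⟩⟩
  have key : ∀ u, RewStar R s u → ∃ w, RewStar R t w ∧ PI R u w := by
    intro u hu
    induction hu with
    | refl => exact ⟨t, Relation.ReflTransGen.refl, hpist⟩
    | tail hsv hstep ih =>
        obtain ⟨w, hw, hpi⟩ := ih
        obtain ⟨w₁, hw₁, hpi₁⟩ := pi_step hao hnv hpi hstep (hrs w hw)
        exact ⟨w₁, hw.trans hw₁, hpi₁⟩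
  intro u hu hred
  obtain ⟨w, hw, hpi⟩ := key u hu
  exact hrs w hw (pi_redex hao hnv hpi hred)


end Main
end Stmt8Aux


/-- in an almost orthogonal TRS, root-stability is preserved
backwards along inner rewrite sequences. -/
theorem stmt8 {C F : Type} (R : TRS C F) (hao : AlmostOrthogonal R)
    (s t : Tm C F) (hrs : RootStable R t)
    (hinner : Relation.ReflTransGen (InnerRew R) s t) :
    RootStable R s := by
  have hnv : ∀ r ∈ R, ∀ x, r.1 ≠ Tm.var x := by
    intro r hr x he
    exact hrs t Relation.ReflTransGen.refl ⟨r, hr, fun _ => t, by rw [he]; rfl⟩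
  induction hinner using Relation.ReflTransGen.head_induction_on with
  | refl => exact hrs
  | head hstep _ ih => exact Stmt8Aux.step_back hao hnv ih hstep

end PE
end
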